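/- Let p be a prime and K a field of characteristic p. Define F ∈ K[X, Y, Z, W] by F = (X^{p+1} + Z^{p+1})^p·X + (X^p + X·Z^{p-1})^p·Z^{p+1} + Y^{p^2+p+1} + W^{p^2+p+1}. Then (∂F/∂X)·X^{p^3} + (∂F/∂Y)·Y^{p^3} + (∂F/∂Z)·Z^{p^3} + (∂F/∂W)·W^{p^3} = F^p as polynomials. In particular, F divides Σ partial-derivative-weighted p^3-powers, so the surface F = 0 is 𝔽_{p^3}-Frobenius nonclassical. -/
import Mathlib


open MvPolynomial

theorem stmt_10 (p : ℕ) (hp : p.Prime) (K : Type*) [Field K] [CharP K p]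
    (F : MvPolynomial (Fin 4) K)
    (hF : F = (X 0 ^ (p + 1) + X 2 ^ (p + 1)) ^ p * X 0 +
        (X 0 ^ p + X 0 * X 2 ^ (p - 1)) ^ p * X 2 ^ (p + 1) +
        X 1 ^ (p ^ 2 + p + 1) + X 3 ^ (p ^ 2 + p + 1)) :
    (∑ i : Fin 4, (pderiv i F) * X i ^ (p ^ 3)) = F ^ p ∧
    F ∣ ∑ i : Fin 4, (pderiv i F) * X i ^ (p ^ 3) := by
  haveI := Fact.mk hp
  set A : MvPolynomial (Fin 4) K := X 0
  set B : MvPolynomial (Fin 4) K := X 1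
  set C : MvPolynomial (Fin 4) K := X 2
  set D : MvPolynomial (Fin 4) K := X 3
  have dA : pderiv 0 F = (A ^ (p + 1) + C ^ (p + 1)) ^ p := by
    rw [hF]
    simp [A, B, C, D, pderiv_mul, Derivation.leibniz_pow, pderiv_X_self, pderiv_X_of_ne,
      nsmul_eq_mul]
  have dB : pderiv 1 F = B ^ (p ^ 2 + p) := by
    rw [hF]
    simp [A, B, C, D, pderiv_mul, Derivation.leibniz_pow, pderiv_X_self, pderiv_X_of_ne,
      nsmul_eq_mul]
  have dC : pderiv 2 F = (A ^ p + A * C ^ (p - 1)) ^ p * C ^ p := by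
    rw [hF]
    simp [A, B, C, D, pderiv_mul, Derivation.leibniz_pow, pderiv_X_self, pderiv_X_of_ne,
      nsmul_eq_mul]
  have dD : pderiv 3 F = D ^ (p ^ 2 + p) := by
    rw [hF]
    simp [A, B, C, D, pderiv_mul, Derivation.leibniz_pow, pderiv_X_self, pderiv_X_of_ne,
      nsmul_eq_mul]
  have frob : ∀ x y : MvPolynomial (Fin 4) K, (x + y) ^ p = x ^ p + y ^ p :=
    fun x y => add_pow_char x y p
  have key : (A ^ (p + 1) + C ^ (p + 1)) * A ^ (p ^ 2)
        + (A ^ p + A * C ^ (p - 1)) * C ^ (p ^ 2 + 1)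
      = (A ^ (p + 1) + C ^ (p + 1)) ^ p * A
        + (A ^ p + A * C ^ (p - 1)) ^ p * C ^ (p + 1) := by
    rw [frob (A ^ (p + 1)) (C ^ (p + 1)), frob (A ^ p) (A * C ^ (p - 1))]
    obtain ⟨n, rfl⟩ : ∃ n, p = n + 1 := ⟨p - 1, (Nat.succ_pred_eq_of_pos hp.pos).symm⟩
    simp only [Nat.add_sub_cancel]
    ring
  have main : (∑ i : Fin 4, (pderiv i F) * X i ^ (p ^ 3)) = F ^ p := by
    rw [Fin.sum_univ_four, dA, dB, dC, dD]
    calc (A ^ (p + 1) + C ^ (p + 1)) ^ p * X 0 ^ p ^ 3 + B ^ (p ^ 2 + p) * X 1 ^ p ^ 3 +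
          (A ^ p + A * C ^ (p - 1)) ^ p * C ^ p * X 2 ^ p ^ 3 + D ^ (p ^ 2 + p) * X 3 ^ p ^ 3
        = ((A ^ (p + 1) + C ^ (p + 1)) * A ^ (p ^ 2)
            + (A ^ p + A * C ^ (p - 1)) * C ^ (p ^ 2 + 1)) ^ p
          + (B ^ (p ^ 2 + p + 1)) ^ p + (D ^ (p ^ 2 + p + 1)) ^ p := by
          rw [frob ((A ^ (p + 1) + C ^ (p + 1)) * A ^ (p ^ 2))
            ((A ^ p + A * C ^ (p - 1)) * C ^ (p ^ 2 + 1)), mul_pow, mul_pow]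
          ring
      _ = ((A ^ (p + 1) + C ^ (p + 1)) ^ p * A
            + (A ^ p + A * C ^ (p - 1)) ^ p * C ^ (p + 1)) ^ p
          + (B ^ (p ^ 2 + p + 1)) ^ p + (D ^ (p ^ 2 + p + 1)) ^ p := by rw [key]
      _ = F ^ p := by
          rw [hF, frob _ (D ^ (p ^ 2 + p + 1)), frob _ (B ^ (p ^ 2 + p + 1))]
  exact ⟨main, main ▸ dvd_pow_self F hp.ne_zero⟩
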